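/- arXiv:2302.09183 — 2 statements merged into one kernel-verified Lean document; each statement's English description precedes it below -/
import Mathlib

section
/- Let γ ∈ [0,1) and set K_γ = 2 + ⌈2γ/(1−γ)⌉. Let M be a randomized mechanism on datasets that satisfies (ε,δ)-differential privacy with respect to add-or-remove-one adjacency. Then the composed mechanism M ∘ P_pre, which first applies the demographic-parity pre-processor P_pre with violation bound γ and then runs M, satisfies (K_γ·ε, K_γ·e^{K_γ·ε}·δ)-differential privacy with respect to add-or-remove-one adjacency. -/
open MeasureTheory

/-- A randomized mechanism `M` (assigning to each dataset a measure on a measurable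
outcome space) satisfies `(ε, δ)`-differential privacy with respect to the adjacency
relation `adj` if for all adjacent datasets and all measurable outcome sets `S`,
`M d S ≤ e^ε · M d' S + δ`. -/
def IsDP {D R : Type*} [MeasurableSpace R] (adj : D → D → Prop)
    (M : D → Measure R) (ε δ : ℝ) : Prop :=
  ∀ d d' : D, adj d d' → ∀ S : Set R, MeasurableSet S →
    M d S ≤ ENNReal.ofReal (Real.exp ε) * M d' S + ENNReal.ofReal δ

/-- Add-or-remove-one adjacency on datasets (finite sets of data points). -/
def Adjacent {X : Type*} [DecidableEq X] (D D' : Finset X) : Prop :=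
  (∃ x ∉ D, D' = insert x D) ∨ (∃ x ∉ D', D = insert x D')

/-- The first `k` elements of a finite set in the fixed linear order. -/
def firstK {X : Type*} [LinearOrder X] (s : Finset X) (k : ℕ) : Finset X :=
  s.filter (fun a => (s.filter (· < a)).card < k)

/-- The number of majority-subgroup points kept when the minority subgroup
has size `m`: `m + ⌊2γm/(1−γ)⌋`. -/
noncomputable def keepCount (γ : ℝ) (m : ℕ) : ℕ := m + ⌊2 * γ * m / (1 - γ)⌋₊

/-- The demographic-parity pre-processor acting inside one label class: keep all
points of the minority sensitive subgroup, and keep only the first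
`m + ⌊2γm/(1−γ)⌋` points (in the fixed order) of the majority subgroup. -/
noncomputable def preprocessLabel {X : Type*} [LinearOrder X] (z : X → Bool) (γ : ℝ)
    (s : Finset X) : Finset X :=
  let A := s.filter (fun a => z a = false)
  let B := s.filter (fun a => z a = true)
  if A.card ≤ B.card then A ∪ firstK B (keepCount γ A.card)
  else B ∪ firstK A (keepCount γ B.card)

/-- The demographic-parity pre-processor `P_pre` with violation bound `γ`:
apply the per-label-class pre-processing to each label class of the dataset. -/
noncomputable def preprocess {X Y : Type*} [LinearOrder X] [DecidableEq Y]
    (z : X → Bool) (label : X → Y) (γ : ℝ) (D : Finset X) : Finset X :=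
  D.filter (fun a => a ∈ preprocessLabel z γ (D.filter (fun b => label b = label a)))

/-- `K_γ = 2 + ⌈2γ/(1−γ)⌉`. -/
noncomputable def Kγ (γ : ℝ) : ℕ := 2 + ⌈2 * γ / (1 - γ)⌉₊

namespace PP
open scoped ENNReal
variable {X : Type*} [LinearOrder X]



def rank (t : Finset X) (a : X) : ℕ := (t.filter (· < a)).card

lemma mem_firstK {t : Finset X} {k : ℕ} {a : X} :
    a ∈ firstK t k ↔ a ∈ t ∧ rank t a < k := Finset.mem_filter

lemma firstK_subset (t : Finset X) (k : ℕ) : firstK t k ⊆ t := Finset.filter_subset _ _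

lemma rank_lt_card {t : Finset X} {a : X} (ha : a ∈ t) : rank t a < t.card := by
  apply Finset.card_lt_card
  constructor
  · exact Finset.filter_subset _ _
  · intro h
    have := h ha
    simp at this

lemma rank_strictMono {t : Finset X} {a b : X} (ha : a ∈ t) (hab : a < b) :
    rank t a < rank t b := by
  apply Finset.card_lt_card
  constructor
  · intro c hc
    rw [Finset.mem_filter] at *
    exact ⟨hc.1, lt_trans hc.2 hab⟩
  · intro h
    have := h (Finset.mem_filter.2 ⟨ha, hab⟩)
    simp at this

lemma rank_injOn {t : Finset X} {a b : X} (ha : a ∈ t) (hb : b ∈ t)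
    (h : rank t a = rank t b) : a = b := by
  rcases lt_trichotomy a b with h1 | h1 | h1
  · exact absurd h (rank_strictMono ha h1).ne
  · exact h1
  · exact absurd h.symm (rank_strictMono hb h1).ne

lemma rank_mono_sub {t t' : Finset X} (h : t ⊆ t') (a : X) : rank t a ≤ rank t' a :=
  Finset.card_le_card (Finset.filter_subset_filter _ h)

lemma rank_insert_le {t : Finset X} (x a : X) : rank (insert x t) a ≤ rank t a + 1 := by
  unfold rank
  rw [Finset.filter_insert]
  split
  · exact (Finset.card_insert_le _ _)
  · exact Nat.le_succ_of_le (le_refl _)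

lemma firstK_mono {t : Finset X} {k k' : ℕ} (h : k ≤ k') : firstK t k ⊆ firstK t k' := by
  intro a ha
  rw [mem_firstK] at *
  exact ⟨ha.1, lt_of_lt_of_le ha.2 h⟩

lemma firstK_eq_self {t : Finset X} {k : ℕ} (h : t.card ≤ k) : firstK t k = t := by
  apply Finset.Subset.antisymm (firstK_subset _ _)
  intro a ha
  exact mem_firstK.2 ⟨ha, lt_of_lt_of_le (rank_lt_card ha) h⟩

lemma card_of_rank_range {t u : Finset X} (hu : u ⊆ t) {lo hi : ℕ}
    (h : ∀ a ∈ u, rank t a ∈ Finset.Ico lo hi) : u.card ≤ hi - lo := by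
  calc u.card ≤ (Finset.Ico lo hi).card :=
        Finset.card_le_card_of_injOn (rank t) h
          (fun a ha b hb => rank_injOn (hu ha) (hu hb))
    _ = hi - lo := Nat.card_Ico lo hi

lemma card_firstK_diff {t : Finset X} {k k' : ℕ} (h : k ≤ k') :
    (firstK t k' \ firstK t k).card ≤ k' - k := by
  apply card_of_rank_range (t := t)
  · intro a ha
    exact firstK_subset _ _ (Finset.mem_sdiff.1 ha).1
  · intro a ha
    rw [Finset.mem_sdiff, mem_firstK, mem_firstK] at ha
    rw [Finset.mem_Ico]
    exact ⟨by by_contra hc; exact ha.2 ⟨ha.1.1, by omega⟩, ha.1.2⟩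

lemma card_sdiff_firstK {t : Finset X} {k : ℕ} :
    (t \ firstK t k).card ≤ t.card - k := by
  apply card_of_rank_range (t := t)
  · intro a ha; exact (Finset.mem_sdiff.1 ha).1
  · intro a ha
    rw [Finset.mem_sdiff, mem_firstK] at ha
    rw [Finset.mem_Ico]
    exact ⟨by by_contra hc; exact ha.2 ⟨ha.1, by omega⟩, rank_lt_card ha.1⟩

lemma card_firstK_insert_diff {t : Finset X} {k : ℕ} {x : X} (hx : x ∉ t) :
    ((firstK (insert x t) k \ firstK t k) ∪ (firstK t k \ firstK (insert x t) k)).card ≤ 2 := by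
  apply le_trans (Finset.card_union_le _ _)
  have h1 : firstK (insert x t) k \ firstK t k ⊆ {x} := by
    intro a ha
    rw [Finset.mem_sdiff, mem_firstK] at ha
    rcases Finset.mem_insert.1 ha.1.1 with h | h
    · simp [h]
    · exact absurd (mem_firstK.2 ⟨h, lt_of_le_of_lt (rank_mono_sub (Finset.subset_insert x t) a) ha.1.2⟩) ha.2
  have h2 : (firstK t k \ firstK (insert x t) k).card ≤ (k+1) - k := by
    apply card_of_rank_range (t := insert x t)
    · intro a ha
      exact Finset.subset_insert x t (firstK_subset _ _ (Finset.mem_sdiff.1 ha).1)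
    · intro a ha
      rw [Finset.mem_sdiff, mem_firstK, mem_firstK] at ha
      rw [Finset.mem_Ico]
      constructor
      · by_contra hc
        exact ha.2 ⟨Finset.subset_insert x t ha.1.1, by omega⟩
      · have := rank_insert_le x a (t := t)
        omega
  have := Finset.card_le_card h1
  simp only [Finset.card_singleton] at this
  omega

lemma symmdiff_union_subset (P P' Q Q' : Finset X) :
    ((P ∪ Q) \ (P' ∪ Q')) ∪ ((P' ∪ Q') \ (P ∪ Q)) ⊆
      ((P \ P') ∪ (P' \ P)) ∪ ((Q \ Q') ∪ (Q' \ Q)) := by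
  intro a
  simp only [Finset.mem_union, Finset.mem_sdiff, not_or]
  tauto



lemma keepCount_ge (γ : ℝ) (m : ℕ) : m ≤ keepCount γ m := Nat.le_add_right _ _

lemma keepCount_mono {γ : ℝ} (hγ0 : 0 ≤ γ) (hγ1 : γ < 1) {m : ℕ} :
    keepCount γ m ≤ keepCount γ (m + 1) := by
  unfold keepCount
  have h : (2 * γ * m / (1 - γ)) ≤ 2 * γ * (m + 1) / (1 - γ) := by
    apply div_le_div_of_nonneg_right ?_ (by linarith) |>.trans (le_refl _)
    · push_cast; nlinarith
  have := Nat.floor_mono h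
  push_cast at this ⊢
  omega

lemma keepCount_step {γ : ℝ} (hγ0 : 0 ≤ γ) (hγ1 : γ < 1) (m : ℕ) :
    keepCount γ (m + 1) ≤ keepCount γ m + (Kγ γ - 1) := by
  unfold keepCount Kγ
  have hpos : (0:ℝ) < 1 - γ := by linarith
  set a : ℝ := 2 * γ * m / (1 - γ) with ha
  set b : ℝ := 2 * γ / (1 - γ) with hb
  have hb0 : 0 ≤ b := by positivity
  have ha0 : 0 ≤ a := by positivity
  have heq : 2 * γ * ((m : ℝ) + 1) / (1 - γ) = a + b := by
    rw [ha, hb, ← add_div]; congr 1; ring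
  have hfl : ⌊2 * γ * ((m:ℕ) + 1 : ℕ) / (1 - γ)⌋₊ ≤ ⌊a⌋₊ + ⌈b⌉₊ := by
    have h1 : 2 * γ * (((m:ℕ) + 1 : ℕ) : ℝ) / (1 - γ) = a + b := by push_cast; rw [heq]
    rw [h1]
    have h2 : a + b < (⌊a⌋₊ + ⌈b⌉₊ : ℕ) + 1 := by
      have := Nat.lt_floor_add_one a
      have := Nat.le_ceil b
      push_cast
      linarith
    have := (Nat.floor_lt (add_nonneg ha0 hb0)).2 (by exact_mod_cast h2)
    omega
  omega


noncomputable def kept (γ : ℝ) (A B : Finset X) : Finset X :=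
  if A.card ≤ B.card then A ∪ firstK B (keepCount γ A.card)
  else B ∪ firstK A (keepCount γ B.card)

lemma card_symmdiff_insert_self (A : Finset X) (x : X) :
    ((insert x A \ A) ∪ (A \ insert x A)).card ≤ 1 := by
  have h1 : insert x A \ A ⊆ {x} := by
    intro a ha
    rw [Finset.mem_sdiff, Finset.mem_insert] at ha
    rcases ha.1 with h | h
    · simp [h]
    · exact absurd h ha.2
  have h2 : A \ insert x A = ∅ := by
    rw [Finset.sdiff_eq_empty_iff_subset]
    exact Finset.subset_insert x A
  rw [h2, Finset.union_empty]
  simpa using Finset.card_le_card h1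

lemma card_firstK_step {γ : ℝ} (hγ0 : 0 ≤ γ) (hγ1 : γ < 1) (t : Finset X) (m : ℕ) :
    ((firstK t (keepCount γ (m+1)) \ firstK t (keepCount γ m)) ∪
      (firstK t (keepCount γ m) \ firstK t (keepCount γ (m+1)))).card ≤ Kγ γ - 1 := by
  have hmono := keepCount_mono hγ0 hγ1 (m := m)
  have h2 : firstK t (keepCount γ m) \ firstK t (keepCount γ (m+1)) = ∅ := by
    rw [Finset.sdiff_eq_empty_iff_subset]
    exact firstK_mono hmono
  rw [h2, Finset.union_empty]
  have := card_firstK_diff (t := t) hmono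
  have := keepCount_step hγ0 hγ1 m
  omega

lemma card_sdiff_firstK_keep {γ : ℝ} {t : Finset X} {m : ℕ} (ht : t.card = m + 1) :
    (t \ firstK t (keepCount γ m)).card ≤ 1 := by
  have := card_sdiff_firstK (t := t) (k := keepCount γ m)
  have := keepCount_ge γ m
  omega

lemma kept_insert_left {γ : ℝ} (hγ0 : 0 ≤ γ) (hγ1 : γ < 1) {A B : Finset X} {x : X}
    (hx : x ∉ A) :
    ((kept γ (insert x A) B \ kept γ A B) ∪ (kept γ A B \ kept γ (insert x A) B)).card
      ≤ Kγ γ := by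
  have hcard : (insert x A).card = A.card + 1 := Finset.card_insert_of_notMem hx
  have hK2 : 2 ≤ Kγ γ := Nat.le_add_right 2 _
  have hK1 : 1 ≤ Kγ γ - 1 := by omega
  by_cases h1 : A.card + 1 ≤ B.card
  · -- minority side A grows, stays (weak) minority
    have e1 : kept γ (insert x A) B
        = insert x A ∪ firstK B (keepCount γ (A.card + 1)) := by
      unfold kept; rw [hcard, if_pos h1]
    have e2 : kept γ A B = A ∪ firstK B (keepCount γ A.card) := by
      unfold kept; rw [if_pos (by omega)]
    rw [e1, e2]
    apply le_trans (Finset.card_le_card (symmdiff_union_subset _ _ _ _))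
    apply le_trans (Finset.card_union_le _ _)
    have hA := card_symmdiff_insert_self A x
    have hB := card_firstK_step (t := B) hγ0 hγ1 A.card
    omega
  by_cases h2 : A.card ≤ B.card
  · -- tie broken: roles swap
    have hAB : A.card = B.card := by omega
    have e2 : kept γ A B = A ∪ B := by
      unfold kept
      rw [if_pos h2, firstK_eq_self (by have := keepCount_ge γ A.card; omega)]
    have e1 : kept γ (insert x A) B
        = firstK (insert x A) (keepCount γ B.card) ∪ B := by
      unfold kept
      rw [if_neg (by omega)]
      exact Finset.union_comm _ _
    rw [e1, e2, show A ∪ B = B ∪ A from Finset.union_comm A B,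
      show firstK (insert x A) (keepCount γ B.card) ∪ B
        = B ∪ firstK (insert x A) (keepCount γ B.card) from Finset.union_comm _ _]
    apply le_trans (Finset.card_le_card (symmdiff_union_subset _ _ _ _))
    apply le_trans (Finset.card_union_le _ _)
    have hBB : ((B \ B) ∪ (B \ B)).card = 0 := by simp
    set F := firstK (insert x A) (keepCount γ B.card) with hF
    have hFA : (F \ A).card ≤ 1 := by
      have : F \ A ⊆ {x} := by
        intro a ha
        rw [Finset.mem_sdiff] at ha
        have := firstK_subset (insert x A) (keepCount γ B.card) ha.1
        rcases Finset.mem_insert.1 this with h | h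
        · simp [h]
        · exact absurd h ha.2
      simpa using Finset.card_le_card this
    have hAF : (A \ F).card ≤ 1 := by
      have hsub : A \ F ⊆ insert x A \ F :=
        Finset.sdiff_subset_sdiff (Finset.subset_insert x A) (le_refl _)
      refine le_trans (Finset.card_le_card hsub) ?_
      exact card_sdiff_firstK_keep (by omega)
    have := Finset.card_union_le (F \ A) (A \ F)
    omega
  · -- A strictly majority
    have e2 : kept γ A B = B ∪ firstK A (keepCount γ B.card) := by
      unfold kept; rw [if_neg h2]
    have e1 : kept γ (insert x A) B
        = B ∪ firstK (insert x A) (keepCount γ B.card) := by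
      unfold kept; rw [if_neg (by omega)]
    rw [e1, e2]
    apply le_trans (Finset.card_le_card (symmdiff_union_subset _ _ _ _))
    apply le_trans (Finset.card_union_le _ _)
    have hBB : ((B \ B) ∪ (B \ B)).card = 0 := by simp
    have := card_firstK_insert_diff (t := A) (k := keepCount γ B.card) hx
    omega

lemma kept_insert_right {γ : ℝ} (hγ0 : 0 ≤ γ) (hγ1 : γ < 1) {A B : Finset X} {x : X}
    (hx : x ∉ B) :
    ((kept γ A (insert x B) \ kept γ A B) ∪ (kept γ A B \ kept γ A (insert x B))).card
      ≤ Kγ γ := by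
  have hcard : (insert x B).card = B.card + 1 := Finset.card_insert_of_notMem hx
  have hK2 : 2 ≤ Kγ γ := Nat.le_add_right 2 _
  have hK1 : 1 ≤ Kγ γ - 1 := by omega
  by_cases h1 : A.card ≤ B.card
  · -- B majority, grows
    have e1 : kept γ A (insert x B)
        = A ∪ firstK (insert x B) (keepCount γ A.card) := by
      unfold kept; rw [if_pos (by omega)]
    have e2 : kept γ A B = A ∪ firstK B (keepCount γ A.card) := by
      unfold kept; rw [if_pos h1]
    rw [e1, e2]
    apply le_trans (Finset.card_le_card (symmdiff_union_subset _ _ _ _))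
    apply le_trans (Finset.card_union_le _ _)
    have hAA : ((A \ A) ∪ (A \ A)).card = 0 := by simp
    have := card_firstK_insert_diff (t := B) (k := keepCount γ A.card) hx
    omega
  by_cases h2 : A.card ≤ B.card + 1
  · -- tie after insert: roles swap
    have hAB : A.card = B.card + 1 := by omega
    have e1 : kept γ A (insert x B) = insert x B ∪ A := by
      unfold kept
      rw [if_pos (by omega), firstK_eq_self
        (by have := keepCount_ge γ A.card; omega)]
      exact Finset.union_comm _ _
    have e2 : kept γ A B = B ∪ firstK A (keepCount γ B.card) := by
      unfold kept; rw [if_neg h1]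
    rw [e1, e2]
    apply le_trans (Finset.card_le_card (symmdiff_union_subset _ _ _ _))
    apply le_trans (Finset.card_union_le _ _)
    have hB := card_symmdiff_insert_self B x
    set F := firstK A (keepCount γ B.card) with hF
    have hAF : ((A \ F) ∪ (F \ A)).card ≤ 1 := by
      have hFe : F \ A = ∅ := by
        rw [Finset.sdiff_eq_empty_iff_subset]; exact firstK_subset _ _
      rw [hFe, Finset.union_empty]
      exact card_sdiff_firstK_keep (by omega)
    omega
  · -- A still strict majority
    have e1 : kept γ A (insert x B)
        = insert x B ∪ firstK A (keepCount γ (B.card + 1)) := by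
      unfold kept; rw [if_neg (by omega), hcard]
    have e2 : kept γ A B = B ∪ firstK A (keepCount γ B.card) := by
      unfold kept; rw [if_neg h1]
    rw [e1, e2]
    apply le_trans (Finset.card_le_card (symmdiff_union_subset _ _ _ _))
    apply le_trans (Finset.card_union_le _ _)
    have hB := card_symmdiff_insert_self B x
    have hF := card_firstK_step (t := A) hγ0 hγ1 B.card
    omega


lemma preprocessLabel_eq (z : X → Bool) (γ : ℝ) (s : Finset X) :
    preprocessLabel z γ s
      = kept γ (s.filter (fun a => z a = false)) (s.filter (fun a => z a = true)) := rfl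

lemma preprocessLabel_subset (z : X → Bool) (γ : ℝ) (s : Finset X) :
    preprocessLabel z γ s ⊆ s := by
  rw [preprocessLabel_eq]
  unfold kept
  split
  · exact Finset.union_subset (Finset.filter_subset _ _)
      ((firstK_subset _ _).trans (Finset.filter_subset _ _))
  · exact Finset.union_subset (Finset.filter_subset _ _)
      ((firstK_subset _ _).trans (Finset.filter_subset _ _))

lemma preprocessLabel_insert (z : X → Bool) {γ : ℝ} (hγ0 : 0 ≤ γ) (hγ1 : γ < 1)
    {s : Finset X} {x : X} (hx : x ∉ s) :
    ((preprocessLabel z γ (insert x s) \ preprocessLabel z γ s) ∪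
      (preprocessLabel z γ s \ preprocessLabel z γ (insert x s))).card ≤ Kγ γ := by
  rw [preprocessLabel_eq, preprocessLabel_eq, Finset.filter_insert, Finset.filter_insert]
  cases hzx : z x with
  | false =>
    rw [if_pos (by simp [hzx]), if_neg (by simp [hzx])]
    exact kept_insert_left hγ0 hγ1 (fun h => hx (Finset.filter_subset _ _ h))
  | true =>
    rw [if_neg (by simp [hzx]), if_pos (by simp [hzx])]
    exact kept_insert_right hγ0 hγ1 (fun h => hx (Finset.filter_subset _ _ h))

lemma preprocess_insert_diff {Y : Type*} [DecidableEq Y] (z : X → Bool) (label : X → Y)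
    {γ : ℝ} (hγ0 : 0 ≤ γ) (hγ1 : γ < 1) {D : Finset X} {x : X} (hx : x ∉ D) :
    ((preprocess z label γ (insert x D) \ preprocess z label γ D) ∪
      (preprocess z label γ D \ preprocess z label γ (insert x D))).card ≤ Kγ γ := by
  set s := D.filter (fun b => label b = label x) with hs
  have hxs : x ∉ s := fun h => hx (Finset.mem_filter.1 h).1
  refine le_trans (Finset.card_le_card ?_) (preprocessLabel_insert z hγ0 hγ1 hxs)
  have hclass : ∀ a : X, label a = label x →
      D.filter (fun b => label b = label a) = s := by
    intro a hlab
    rw [hs]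
    apply Finset.filter_congr
    intro b _
    rw [hlab]
  have hclass' : ∀ a : X, label a = label x →
      (insert x D).filter (fun b => label b = label a) = insert x s := by
    intro a hlab
    rw [Finset.filter_insert, if_pos (by rw [hlab]), hclass a hlab]
  have hclassne : ∀ a : X, label a ≠ label x →
      (insert x D).filter (fun b => label b = label a)
        = D.filter (fun b => label b = label a) := by
    intro a hlab
    rw [Finset.filter_insert, if_neg (fun h => hlab h.symm)]
  intro a ha
  simp only [Finset.mem_union, Finset.mem_sdiff, preprocess, Finset.mem_filter] at ha ⊢
  by_cases hlab : label a = label x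
  · rw [hclass a hlab, hclass' a hlab] at ha
    have hPs : a ∈ preprocessLabel z γ s → a ∈ D :=
      fun h => (Finset.mem_filter.1 (preprocessLabel_subset z γ s h)).1
    have hPs' : a ∈ preprocessLabel z γ (insert x s) → a ∈ insert x D := by
      intro h
      rcases Finset.mem_insert.1 (preprocessLabel_subset z γ (insert x s) h) with h' | h'
      · rw [h']; exact Finset.mem_insert_self x D
      · exact Finset.mem_insert_of_mem (Finset.mem_filter.1 h').1
    have hins : a ∈ D → a ∈ insert x D := Finset.mem_insert_of_mem
    tauto
  · have hax : a ≠ x := fun h => hlab (by rw [h])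
    rw [hclassne a hlab] at ha
    have : a ∈ insert x D ↔ a ∈ D := by
      rw [Finset.mem_insert]
      constructor
      · rintro (h | h)
        · exact absurd h hax
        · exact h
      · exact Or.inr
    tauto

lemma group_dp {X R : Type*} [DecidableEq X] [MeasurableSpace R]
    {M : Finset X → Measure R} {ε δ : ℝ} (hε : 0 ≤ ε) (hδ : 0 ≤ δ)
    (hM : IsDP Adjacent M ε δ) (S : Set R) (hS : MeasurableSet S) :
    ∀ k : ℕ, ∀ s t : Finset X, ((s \ t) ∪ (t \ s)).card ≤ k →
      M s S ≤ ENNReal.ofReal (Real.exp (k * ε)) * M t S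
        + ENNReal.ofReal (k * Real.exp (k * ε) * δ) := by
  intro k
  induction k with
  | zero =>
    intro s t h
    have hst : s = t := by
      have he : (s \ t) ∪ (t \ s) = ∅ := Finset.card_eq_zero.1 (Nat.le_zero.1 h)
      have h1 : s \ t = ∅ := by
        rw [← Finset.subset_empty, ← he]; exact Finset.subset_union_left
      have h2 : t \ s = ∅ := by
        rw [← Finset.subset_empty, ← he]; exact Finset.subset_union_right
      exact Finset.Subset.antisymm (Finset.sdiff_eq_empty_iff_subset.1 h1)
        (Finset.sdiff_eq_empty_iff_subset.1 h2)
    subst hst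
    simp [Real.exp_zero]
  | succ k ih =>
    intro s t h
    by_cases hst : s = t
    · subst hst
      have h1 : (1 : ℝ≥0∞) ≤ ENNReal.ofReal (Real.exp ((k+1 : ℕ) * ε)) := by
        rw [show (1 : ℝ≥0∞) = ENNReal.ofReal 1 by simp]
        exact ENNReal.ofReal_le_ofReal (Real.one_le_exp (by positivity))
      calc M s S = 1 * M s S := (one_mul _).symm
        _ ≤ ENNReal.ofReal (Real.exp ((k+1 : ℕ) * ε)) * M s S :=
            mul_le_mul_left h1 _
        _ ≤ _ := le_self_add
    · have hne : ((s \ t) ∪ (t \ s)).Nonempty := by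
        rw [Finset.nonempty_iff_ne_empty]
        intro he
        apply hst
        have h1 : s \ t = ∅ := by
          rw [← Finset.subset_empty, ← he]; exact Finset.subset_union_left
        have h2 : t \ s = ∅ := by
          rw [← Finset.subset_empty, ← he]; exact Finset.subset_union_right
        exact Finset.Subset.antisymm (Finset.sdiff_eq_empty_iff_subset.1 h1)
          (Finset.sdiff_eq_empty_iff_subset.1 h2)
      obtain ⟨x, hxmem⟩ := hne
      -- the combine step, shared by both cases
      have combine : ∀ u : Finset X, Adjacent s u →
          ((u \ t) ∪ (t \ u)).card ≤ k →
          M s S ≤ ENNReal.ofReal (Real.exp ((k+1 : ℕ) * ε)) * M t S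
            + ENNReal.ofReal ((k+1 : ℕ) * Real.exp ((k+1 : ℕ) * ε) * δ) := by
        intro u hadj hcard
        have step := hM s u hadj S hS
        have ihu := ih u t hcard
        have hexp : Real.exp ε * Real.exp ((k : ℕ) * ε) = Real.exp ((k+1 : ℕ) * ε) := by
          rw [← Real.exp_add]
          congr 1
          push_cast
          ring
        calc M s S ≤ ENNReal.ofReal (Real.exp ε) * M u S + ENNReal.ofReal δ := step
          _ ≤ ENNReal.ofReal (Real.exp ε) *
                (ENNReal.ofReal (Real.exp ((k : ℕ) * ε)) * M t S
                  + ENNReal.ofReal ((k : ℕ) * Real.exp ((k : ℕ) * ε) * δ))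
              + ENNReal.ofReal δ := add_le_add_left (mul_le_mul_right ihu _) _
          _ = ENNReal.ofReal (Real.exp ((k+1 : ℕ) * ε)) * M t S
              + (ENNReal.ofReal (Real.exp ε * ((k : ℕ) * Real.exp ((k : ℕ) * ε) * δ))
                + ENNReal.ofReal δ) := by
            rw [mul_add, ← mul_assoc, ← ENNReal.ofReal_mul (Real.exp_nonneg ε), hexp,
              ← ENNReal.ofReal_mul (Real.exp_nonneg ε), add_assoc]
          _ ≤ ENNReal.ofReal (Real.exp ((k+1 : ℕ) * ε)) * M t S
              + ENNReal.ofReal ((k+1 : ℕ) * Real.exp ((k+1 : ℕ) * ε) * δ) := by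
            apply add_le_add_right
            rw [← ENNReal.ofReal_add (by positivity) hδ]
            apply ENNReal.ofReal_le_ofReal
            have e1 : Real.exp ε * ((k : ℕ) * Real.exp ((k : ℕ) * ε) * δ)
                = (k : ℕ) * Real.exp ((k+1 : ℕ) * ε) * δ := by
              rw [← hexp]; ring
            have e2 : δ ≤ Real.exp ((k+1 : ℕ) * ε) * δ := by
              nlinarith [Real.one_le_exp (show (0:ℝ) ≤ (k+1 : ℕ) * ε by positivity)]
            rw [e1]
            push_cast at e2 ⊢
            linarith
      rcases Finset.mem_union.1 hxmem with hx | hx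
      · -- x ∈ s \ t : remove it from s
        rw [Finset.mem_sdiff] at hx
        refine combine (s.erase x) (Or.inr ⟨x, Finset.notMem_erase x s,
          (Finset.insert_erase hx.1).symm⟩) ?_
        have hsub : ((s.erase x \ t) ∪ (t \ s.erase x)) ⊆ ((s \ t) ∪ (t \ s)).erase x := by
          intro a ha
          simp only [Finset.mem_union, Finset.mem_sdiff, Finset.mem_erase] at ha ⊢
          rcases eq_or_ne a x with rfl | hax
          · exfalso
            rcases ha with ⟨⟨hne, _⟩, _⟩ | ⟨hmem, _⟩
            · exact hne rfl
            · exact hx.2 hmem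
          · exact ⟨hax, by tauto⟩
        have hc := Finset.card_le_card hsub
        rw [Finset.card_erase_of_mem hxmem] at hc
        omega
      · -- x ∈ t \ s : add it to s
        rw [Finset.mem_sdiff] at hx
        refine combine (insert x s) (Or.inl ⟨x, hx.2, rfl⟩) ?_
        have hsub : ((insert x s \ t) ∪ (t \ insert x s)) ⊆ ((s \ t) ∪ (t \ s)).erase x := by
          intro a ha
          simp only [Finset.mem_union, Finset.mem_sdiff, Finset.mem_erase,
            Finset.mem_insert] at ha ⊢
          rcases eq_or_ne a x with rfl | hax
          · exfalso
            rcases ha with ⟨_, hnt⟩ | ⟨_, hns⟩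
            · exact hnt hx.1
            · exact hns (Or.inl rfl)
          · exact ⟨hax, by tauto⟩
        have hc := Finset.card_le_card hsub
        rw [Finset.card_erase_of_mem hxmem] at hc
        omega

end PP

/-- **Privacy cost of fairness pre-processing.** If `M` is `(ε, δ)`-differentially
private (add-or-remove-one adjacency), then `M ∘ P_pre`, with `P_pre` the
demographic-parity pre-processor with violation bound `γ ∈ [0,1)`, is
`(K_γ ε, K_γ e^{K_γ ε} δ)`-differentially private, where `K_γ = 2 + ⌈2γ/(1−γ)⌉`. -/
theorem preprocess_privacy {X Y R : Type*} [LinearOrder X] [DecidableEq Y]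
    [MeasurableSpace R] (z : X → Bool) (label : X → Y)
    (γ : ℝ) (hγ0 : 0 ≤ γ) (hγ1 : γ < 1)
    (ε δ : ℝ) (hε : 0 ≤ ε) (hδ : 0 ≤ δ)
    (M : Finset X → Measure R) (hM : IsDP Adjacent M ε δ) :
    IsDP Adjacent (fun D => M (preprocess z label γ D))
      ((Kγ γ : ℝ) * ε) ((Kγ γ : ℝ) * Real.exp ((Kγ γ : ℝ) * ε) * δ) := by
  intro D D' hadj S hS
  rcases hadj with ⟨x, hx, rfl⟩ | ⟨x, hx, rfl⟩
  · apply PP.group_dp hε hδ hM S hS (Kγ γ)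
    have h := PP.preprocess_insert_diff z label hγ0 hγ1 hx
    rwa [Finset.union_comm] at h
  · exact PP.group_dp hε hδ hM S hS (Kγ γ) _ _
      (PP.preprocess_insert_diff z label hγ0 hγ1 hx)
end

section
/- Let γ ∈ [0,1) and set K_γ = 2 + ⌈2γ/(1−γ)⌉. For any dataset D and any single triple x* = (x, z, y), letting D' = D + {x*} be the dataset obtained by adding x*, the multiset symmetric difference between P_pre(D) and P_pre(D') has cardinality at most K_γ; in particular P_pre(D') can be obtained from P_pre(D) by at most K_γ additions or removals of single points. -/
namespace PreSens

variable {X : Type*} [LinearOrder X]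

def rk (s : Finset X) (a : X) : ℕ := (s.filter (· < a)).card

lemma rk_lt_card {s : Finset X} {a : X} (ha : a ∈ s) : rk s a < s.card :=
  Finset.card_lt_card (Finset.filter_ssubset.2 ⟨a, ha, lt_irrefl a⟩)

lemma rk_lt_rk {s : Finset X} {a b : X} (ha : a ∈ s) (hab : a < b) :
    rk s a < rk s b := by
  apply Finset.card_lt_card
  refine ⟨fun c hc => ?_, ?_⟩
  · rw [Finset.mem_filter] at hc ⊢
    exact ⟨hc.1, hc.2.trans hab⟩
  intro h
  exact lt_irrefl a (Finset.mem_filter.1 (h (Finset.mem_filter.2 ⟨ha, hab⟩))).2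

lemma rk_injOn {s : Finset X} {a b : X} (ha : a ∈ s) (hb : b ∈ s)
    (h : rk s a = rk s b) : a = b := by
  rcases lt_trichotomy a b with h' | h' | h'
  · exact absurd h (rk_lt_rk ha h').ne
  · exact h'
  · exact absurd h.symm (rk_lt_rk hb h').ne

lemma mem_firstK {s : Finset X} {k : ℕ} {a : X} :
    a ∈ firstK s k ↔ a ∈ s ∧ rk s a < k := Finset.mem_filter

lemma firstK_subset (s : Finset X) (k : ℕ) : firstK s k ⊆ s := Finset.filter_subset _ _

lemma firstK_mono (s : Finset X) {k k' : ℕ} (h : k ≤ k') : firstK s k ⊆ firstK s k' := by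
  intro a ha
  rw [mem_firstK] at ha ⊢
  exact ⟨ha.1, lt_of_lt_of_le ha.2 h⟩

lemma firstK_eq_self {s : Finset X} {k : ℕ} (h : s.card ≤ k) : firstK s k = s :=
  Finset.filter_true_of_mem (fun a ha => lt_of_lt_of_le (rk_lt_card ha) h)

lemma card_firstK_sdiff (s : Finset X) (k k' : ℕ) :
    (firstK s k' \ firstK s k).card ≤ k' - k := by
  classical
  have h : (firstK s k' \ firstK s k).card ≤ (Finset.Ico k k').card := by
    apply Finset.card_le_card_of_injOn (rk s)
    · intro a ha
      rw [Finset.mem_coe, Finset.mem_sdiff, mem_firstK, mem_firstK] at ha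
      exact Finset.mem_Ico.2 ⟨le_of_not_gt (fun h => ha.2 ⟨ha.1.1, h⟩), ha.1.2⟩
    · intro a ha b hb hab
      exact rk_injOn (firstK_subset s k' (Finset.mem_sdiff.1 ha).1)
        (firstK_subset s k' (Finset.mem_sdiff.1 hb).1) hab
  simpa [Nat.card_Ico] using h

lemma card_sdiff_firstK (s : Finset X) (k : ℕ) :
    (s \ firstK s k).card ≤ s.card - k := by
  classical
  have h : (s \ firstK s k).card ≤ (Finset.Ico k s.card).card := by
    apply Finset.card_le_card_of_injOn (rk s)
    · intro a ha
      rw [Finset.mem_coe, Finset.mem_sdiff, mem_firstK] at ha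
      exact Finset.mem_Ico.2 ⟨le_of_not_gt (fun h => ha.2 ⟨ha.1, h⟩), rk_lt_card ha.1⟩
    · intro a ha b hb hab
      exact rk_injOn (Finset.mem_sdiff.1 ha).1 (Finset.mem_sdiff.1 hb).1 hab
  simpa [Nat.card_Ico] using h

lemma rk_le_rk_insert (s : Finset X) (x a : X) : rk s a ≤ rk (insert x s) a := by
  apply Finset.card_le_card
  intro c hc
  rw [Finset.mem_filter] at hc ⊢
  exact ⟨Finset.mem_insert_of_mem hc.1, hc.2⟩

lemma rk_insert_le (s : Finset X) (x a : X) : rk (insert x s) a ≤ rk s a + 1 := by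
  classical
  unfold rk
  rw [Finset.filter_insert]
  split_ifs
  · exact Finset.card_insert_le _ _
  · exact Nat.le_succ _

lemma firstK_insert_symdiff (s : Finset X) (x : X) (hx : x ∉ s) (k : ℕ) :
    ((firstK s k \ firstK (insert x s) k) ∪ (firstK (insert x s) k \ firstK s k)).card ≤ 2 := by
  classical
  have h2 : firstK (insert x s) k \ firstK s k ⊆ {x} := by
    intro a ha
    rw [Finset.mem_sdiff, mem_firstK] at ha
    rcases Finset.mem_insert.1 ha.1.1 with h | h
    · simpa using h
    · exact absurd (mem_firstK.2 ⟨h, lt_of_le_of_lt (rk_le_rk_insert s x a) ha.1.2⟩) ha.2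
  have h1 : (firstK s k \ firstK (insert x s) k).card ≤ 1 := by
    apply Finset.card_le_one.2
    intro a ha b hb
    have key : ∀ c ∈ firstK s k \ firstK (insert x s) k, rk (insert x s) c = k := by
      intro c hc
      rw [Finset.mem_sdiff, mem_firstK] at hc
      have hcs : c ∈ insert x s := Finset.mem_insert_of_mem hc.1.1
      have hk : k ≤ rk (insert x s) c :=
        le_of_not_gt (fun h => hc.2 (mem_firstK.2 ⟨hcs, h⟩))
      have := rk_insert_le s x c
      omega
    have has : a ∈ insert x s := Finset.mem_insert_of_mem (firstK_subset s k (Finset.mem_sdiff.1 ha).1)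
    have hbs : b ∈ insert x s := Finset.mem_insert_of_mem (firstK_subset s k (Finset.mem_sdiff.1 hb).1)
    exact rk_injOn has hbs ((key a ha).trans (key b hb).symm)
  calc ((firstK s k \ firstK (insert x s) k) ∪ (firstK (insert x s) k \ firstK s k)).card
      ≤ (firstK s k \ firstK (insert x s) k).card + (firstK (insert x s) k \ firstK s k).card :=
        Finset.card_union_le _ _
    _ ≤ 1 + 1 := add_le_add h1 ((Finset.card_le_card h2).trans (by simp))
    _ = 2 := rfl

lemma le_keepCount (γ : ℝ) (m : ℕ) : m ≤ keepCount γ m := Nat.le_add_right _ _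

lemma keepCount_mono {γ : ℝ} (hγ0 : 0 ≤ γ) (hγ1 : γ < 1) {m m' : ℕ} (h : m ≤ m') :
    keepCount γ m ≤ keepCount γ m' := by
  unfold keepCount
  have h1 : (0:ℝ) < 1 - γ := by linarith
  have h2 : 2 * γ * m / (1 - γ) ≤ 2 * γ * m' / (1 - γ) := by
    have hm : (m : ℝ) ≤ m' := by exact_mod_cast h
    have hnum : 2 * γ * m ≤ 2 * γ * m' := by nlinarith
    rw [div_eq_mul_inv, div_eq_mul_inv]
    exact mul_le_mul_of_nonneg_right hnum (by positivity)
  exact add_le_add h (Nat.floor_le_floor h2)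

lemma keepCount_succ_le {γ : ℝ} (hγ0 : 0 ≤ γ) (hγ1 : γ < 1) (m : ℕ) :
    keepCount γ (m + 1) ≤ keepCount γ m + 1 + ⌈2 * γ / (1 - γ)⌉₊ := by
  have h1 : (0:ℝ) < 1 - γ := by linarith
  have key : ⌊2 * γ * (↑(m+1) : ℝ) / (1 - γ)⌋₊ ≤ ⌊2 * γ * m / (1 - γ)⌋₊ + ⌈2 * γ / (1 - γ)⌉₊ := by
    have heq : 2 * γ * (↑(m+1) : ℝ) / (1 - γ) = 2 * γ * m / (1 - γ) + 2 * γ / (1 - γ) := by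
      push_cast
      field_simp
    rw [heq]
    have hb : (0:ℝ) ≤ 2 * γ * m / (1 - γ) := by positivity
    have hc : (0:ℝ) ≤ 2 * γ / (1 - γ) := by positivity
    have h2 : 2 * γ * m / (1 - γ) + 2 * γ / (1 - γ)
        < (↑(⌊2 * γ * m / (1 - γ)⌋₊ + ⌈2 * γ / (1 - γ)⌉₊ + 1) : ℝ) := by
      push_cast
      have hf := Nat.lt_floor_add_one (2 * γ * m / (1 - γ))
      have hcl := Nat.le_ceil (2 * γ / (1 - γ))
      linarith
    exact Nat.lt_succ_iff.1 ((Nat.floor_lt (by positivity)).2 h2)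
  unfold keepCount
  omega

lemma symdiff_card_le {U V S1 S2 : Finset X} (h1 : U \ V ⊆ S1) (h2 : V \ U ⊆ S2) :
    ((U \ V) ∪ (V \ U)).card ≤ S1.card + S2.card :=
  (Finset.card_le_card (Finset.union_subset_union h1 h2)).trans (Finset.card_union_le _ _)


lemma preprocessLabel_insert (z : X → Bool) {γ : ℝ} (hγ0 : 0 ≤ γ) (hγ1 : γ < 1)
    (s : Finset X) (x : X) (hx : x ∉ s) :
    ((preprocessLabel z γ s \ preprocessLabel z γ (insert x s)) ∪
     (preprocessLabel z γ (insert x s) \ preprocessLabel z γ s)).card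
    ≤ 2 + ⌈2 * γ / (1 - γ)⌉₊ := by
  classical
  set sA := s.filter (fun a => z a = false) with hsA
  set sB := s.filter (fun a => z a = true) with hsB
  have hdef : preprocessLabel z γ s =
      if sA.card ≤ sB.card then sA ∪ firstK sB (keepCount γ sA.card)
      else sB ∪ firstK sA (keepCount γ sB.card) := rfl
  have hdef0 : preprocessLabel z γ (insert x s) =
      if ((insert x s).filter (fun a => z a = false)).card ≤
          ((insert x s).filter (fun a => z a = true)).card then
        ((insert x s).filter (fun a => z a = false)) ∪
          firstK ((insert x s).filter (fun a => z a = true))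
            (keepCount γ ((insert x s).filter (fun a => z a = false)).card)
      else ((insert x s).filter (fun a => z a = true)) ∪
          firstK ((insert x s).filter (fun a => z a = false))
            (keepCount γ ((insert x s).filter (fun a => z a = true)).card) := rfl
  have hxA : x ∉ sA := fun h => hx (Finset.mem_filter.1 h).1
  have hxB : x ∉ sB := fun h => hx (Finset.mem_filter.1 h).1
  cases hzx : z x with
  | false =>
    have hA' : (insert x s).filter (fun a => z a = false) = insert x sA := by
      rw [Finset.filter_insert, if_pos hzx]
    have hB' : (insert x s).filter (fun a => z a = true) = sB := by
      rw [Finset.filter_insert, if_neg (by simp [hzx])]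
    have hcA : (insert x sA).card = sA.card + 1 := Finset.card_insert_of_notMem hxA
    rw [hA', hB', hcA] at hdef0
    by_cases h1 : sA.card + 1 ≤ sB.card
    · -- minority side grows, stays minority
      rw [hdef, if_pos (by omega), hdef0, if_pos h1]
      set F := firstK sB (keepCount γ sA.card) with hF
      set F' := firstK sB (keepCount γ (sA.card + 1)) with hF'
      have hFF : F ⊆ F' := firstK_mono _ (keepCount_mono hγ0 hγ1 (Nat.le_succ _))
      have hsub1 : (sA ∪ F) \ (insert x sA ∪ F') ⊆ (∅ : Finset X) := by
        rw [Finset.sdiff_eq_empty_iff_subset.2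
          (Finset.union_subset_union (Finset.subset_insert _ _) hFF)]
      have hsub2 : (insert x sA ∪ F') \ (sA ∪ F) ⊆ {x} ∪ (F' \ F) := by
        intro c hc
        rw [Finset.mem_sdiff, Finset.mem_union, Finset.mem_insert] at hc
        rw [Finset.mem_union, Finset.mem_singleton, Finset.mem_sdiff]
        rcases hc.1 with (rfl | h) | h
        · exact Or.inl rfl
        · exact absurd (Finset.mem_union_left _ h) hc.2
        · exact Or.inr ⟨h, fun hcF => hc.2 (Finset.mem_union_right _ hcF)⟩
      refine le_trans (symdiff_card_le hsub1 hsub2) ?_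
      simp only [Finset.card_empty, zero_add]
      calc ({x} ∪ (F' \ F)).card ≤ 1 + (F' \ F).card := by
            simpa using Finset.card_union_le {x} (F' \ F)
        _ ≤ 1 + (keepCount γ (sA.card + 1) - keepCount γ sA.card) :=
            Nat.add_le_add_left (card_firstK_sdiff _ _ _) _
        _ ≤ 2 + ⌈2 * γ / (1 - γ)⌉₊ := by
            have := keepCount_succ_le hγ0 hγ1 sA.card
            have := keepCount_mono hγ0 hγ1 (Nat.le_succ sA.card) (γ := γ)
            omega
    · by_cases h0 : sA.card ≤ sB.card
      · -- tie: sA.card = sB.card, side switch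
        have hab : sA.card = sB.card := by omega
        rw [hdef, if_pos h0, hdef0, if_neg (by omega)]
        have hBfull : firstK sB (keepCount γ sA.card) = sB :=
          firstK_eq_self (hab ▸ le_keepCount γ sA.card)
        rw [hBfull]
        set G := firstK (insert x sA) (keepCount γ sB.card) with hG
        have hsub1 : (sA ∪ sB) \ (sB ∪ G) ⊆ (insert x sA) \ G := by
          intro c hc
          rw [Finset.mem_sdiff, Finset.mem_union] at hc
          rw [Finset.mem_sdiff]
          rcases hc.1 with h | h
          · exact ⟨Finset.mem_insert_of_mem h,
              fun hcG => hc.2 (Finset.mem_union_right _ hcG)⟩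
          · exact absurd (Finset.mem_union_left _ h) hc.2
        have hsub2 : (sB ∪ G) \ (sA ∪ sB) ⊆ {x} := by
          intro c hc
          rw [Finset.mem_sdiff, Finset.mem_union] at hc
          rw [Finset.mem_singleton]
          rcases hc.1 with h | h
          · exact absurd (Finset.mem_union_right _ h) hc.2
          · rcases Finset.mem_insert.1 (firstK_subset _ _ h) with h' | h'
            · exact h'
            · exact absurd (Finset.mem_union_left _ h') hc.2
        refine le_trans (symdiff_card_le hsub1 hsub2) ?_
        have hc1 : ((insert x sA) \ G).card ≤ 1 := by
          have h' := card_sdiff_firstK (insert x sA) (keepCount γ sB.card)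
          rw [← hG] at h'
          have := le_keepCount γ sB.card
          omega
        simp only [Finset.card_singleton]
        omega
      · -- majority side gets the new point
        rw [hdef, if_neg h0, hdef0, if_neg (by omega)]
        set k := keepCount γ sB.card with hk
        have hsub1 : (sB ∪ firstK sA k) \ (sB ∪ firstK (insert x sA) k) ⊆
            firstK sA k \ firstK (insert x sA) k := by
          intro c hc
          rw [Finset.mem_sdiff, Finset.mem_union] at hc
          rw [Finset.mem_sdiff]
          rcases hc.1 with h | h
          · exact absurd (Finset.mem_union_left _ h) hc.2
          · exact ⟨h, fun hcG => hc.2 (Finset.mem_union_right _ hcG)⟩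
        have hsub2 : (sB ∪ firstK (insert x sA) k) \ (sB ∪ firstK sA k) ⊆
            firstK (insert x sA) k \ firstK sA k := by
          intro c hc
          rw [Finset.mem_sdiff, Finset.mem_union] at hc
          rw [Finset.mem_sdiff]
          rcases hc.1 with h | h
          · exact absurd (Finset.mem_union_left _ h) hc.2
          · exact ⟨h, fun hcG => hc.2 (Finset.mem_union_right _ hcG)⟩
        refine le_trans (Finset.card_le_card (Finset.union_subset_union hsub1 hsub2)) ?_
        exact le_trans (firstK_insert_symdiff sA x hxA k) (by omega)
  | true =>
    have hA' : (insert x s).filter (fun a => z a = false) = sA := by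
      rw [Finset.filter_insert, if_neg (by simp [hzx])]
    have hB' : (insert x s).filter (fun a => z a = true) = insert x sB := by
      rw [Finset.filter_insert, if_pos hzx]
    have hcB : (insert x sB).card = sB.card + 1 := Finset.card_insert_of_notMem hxB
    rw [hA', hB', hcB] at hdef0
    by_cases h0 : sA.card ≤ sB.card
    · -- majority side gets the new point
      rw [hdef, if_pos h0, hdef0, if_pos (by omega)]
      set k := keepCount γ sA.card with hk
      have hsub1 : (sA ∪ firstK sB k) \ (sA ∪ firstK (insert x sB) k) ⊆
          firstK sB k \ firstK (insert x sB) k := by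
        intro c hc
        rw [Finset.mem_sdiff, Finset.mem_union] at hc
        rw [Finset.mem_sdiff]
        rcases hc.1 with h | h
        · exact absurd (Finset.mem_union_left _ h) hc.2
        · exact ⟨h, fun hcG => hc.2 (Finset.mem_union_right _ hcG)⟩
      have hsub2 : (sA ∪ firstK (insert x sB) k) \ (sA ∪ firstK sB k) ⊆
          firstK (insert x sB) k \ firstK sB k := by
        intro c hc
        rw [Finset.mem_sdiff, Finset.mem_union] at hc
        rw [Finset.mem_sdiff]
        rcases hc.1 with h | h
        · exact absurd (Finset.mem_union_left _ h) hc.2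
        · exact ⟨h, fun hcG => hc.2 (Finset.mem_union_right _ hcG)⟩
      refine le_trans (Finset.card_le_card (Finset.union_subset_union hsub1 hsub2)) ?_
      exact le_trans (firstK_insert_symdiff sB x hxB k) (by omega)
    · by_cases h2 : sA.card ≤ sB.card + 1
      · -- tie in the other direction: sA.card = sB.card + 1, side switch
        have hab : sA.card = sB.card + 1 := by omega
        rw [hdef, if_neg h0, hdef0, if_pos h2]
        have hBfull : firstK (insert x sB) (keepCount γ sA.card) = insert x sB := by
          apply firstK_eq_self
          rw [hcB, ← hab]
          exact le_keepCount γ sA.card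
        rw [hBfull]
        set F := firstK sA (keepCount γ sB.card) with hF
        have hsub1 : (sB ∪ F) \ (sA ∪ insert x sB) ⊆ (∅ : Finset X) := by
          rw [Finset.sdiff_eq_empty_iff_subset.2 ?_]
          intro c hc
          rw [Finset.mem_union] at hc ⊢
          rcases hc with h | h
          · exact Or.inr (Finset.mem_insert_of_mem h)
          · exact Or.inl (firstK_subset _ _ h)
        have hsub2 : (sA ∪ insert x sB) \ (sB ∪ F) ⊆ {x} ∪ (sA \ F) := by
          intro c hc
          rw [Finset.mem_sdiff, Finset.mem_union] at hc
          rw [Finset.mem_union, Finset.mem_singleton, Finset.mem_sdiff]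
          rcases hc.1 with h | h
          · exact Or.inr ⟨h, fun hcF => hc.2 (Finset.mem_union_right _ hcF)⟩
          · rcases Finset.mem_insert.1 h with h' | h'
            · exact Or.inl h'
            · exact absurd (Finset.mem_union_left _ h') hc.2
        refine le_trans (symdiff_card_le hsub1 hsub2) ?_
        simp only [Finset.card_empty, zero_add]
        have hc1 : (sA \ F).card ≤ 1 := by
          have h' := card_sdiff_firstK sA (keepCount γ sB.card)
          rw [← hF] at h'
          have := le_keepCount γ sB.card
          omega
        calc ({x} ∪ (sA \ F)).card ≤ 1 + (sA \ F).card := by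
              simpa using Finset.card_union_le {x} (sA \ F)
          _ ≤ 2 + ⌈2 * γ / (1 - γ)⌉₊ := by omega
      · -- minority side grows, stays minority
        rw [hdef, if_neg h0, hdef0, if_neg h2]
        set F := firstK sA (keepCount γ sB.card) with hF
        set F' := firstK sA (keepCount γ (sB.card + 1)) with hF'
        have hFF : F ⊆ F' := firstK_mono _ (keepCount_mono hγ0 hγ1 (Nat.le_succ _))
        have hsub1 : (sB ∪ F) \ (insert x sB ∪ F') ⊆ (∅ : Finset X) := by
          rw [Finset.sdiff_eq_empty_iff_subset.2
            (Finset.union_subset_union (Finset.subset_insert _ _) hFF)]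
        have hsub2 : (insert x sB ∪ F') \ (sB ∪ F) ⊆ {x} ∪ (F' \ F) := by
          intro c hc
          rw [Finset.mem_sdiff, Finset.mem_union, Finset.mem_insert] at hc
          rw [Finset.mem_union, Finset.mem_singleton, Finset.mem_sdiff]
          rcases hc.1 with (rfl | h) | h
          · exact Or.inl rfl
          · exact absurd (Finset.mem_union_left _ h) hc.2
          · exact Or.inr ⟨h, fun hcF => hc.2 (Finset.mem_union_right _ hcF)⟩
        refine le_trans (symdiff_card_le hsub1 hsub2) ?_
        simp only [Finset.card_empty, zero_add]
        calc ({x} ∪ (F' \ F)).card ≤ 1 + (F' \ F).card := by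
              simpa using Finset.card_union_le {x} (F' \ F)
          _ ≤ 1 + (keepCount γ (sB.card + 1) - keepCount γ sB.card) :=
              Nat.add_le_add_left (card_firstK_sdiff _ _ _) _
          _ ≤ 2 + ⌈2 * γ / (1 - γ)⌉₊ := by
              have := keepCount_succ_le hγ0 hγ1 sB.card
              have := keepCount_mono hγ0 hγ1 (Nat.le_succ sB.card) (γ := γ)
              omega


end PreSens

namespace PreSens

lemma preprocessLabel_subset {X : Type*} [LinearOrder X] (z : X → Bool) (γ : ℝ) (s : Finset X) :
    preprocessLabel z γ s ⊆ s := by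
  have hdef : preprocessLabel z γ s =
      if (s.filter (fun a => z a = false)).card ≤ (s.filter (fun a => z a = true)).card then
        (s.filter (fun a => z a = false)) ∪
          firstK (s.filter (fun a => z a = true))
            (keepCount γ (s.filter (fun a => z a = false)).card)
      else (s.filter (fun a => z a = true)) ∪
          firstK (s.filter (fun a => z a = false))
            (keepCount γ (s.filter (fun a => z a = true)).card) := rfl
  rw [hdef]
  split_ifs <;>
    exact Finset.union_subset (Finset.filter_subset _ _)
      ((firstK_subset _ _).trans (Finset.filter_subset _ _))

end PreSens

/-- **Sensitivity of the demographic-parity pre-processor.** Adding a single data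
point `x` to a dataset `D` changes the output of `P_pre` by at most
`K_γ = 2 + ⌈2γ/(1−γ)⌉` points: the symmetric difference between `P_pre(D)` and
`P_pre(D ∪ {x})` has cardinality at most `K_γ`. -/
theorem preprocess_sensitivity {X Y : Type*} [LinearOrder X] [DecidableEq Y]
    (z : X → Bool) (label : X → Y) (γ : ℝ) (hγ0 : 0 ≤ γ) (hγ1 : γ < 1)
    (D : Finset X) (x : X) (hx : x ∉ D) :
    ((preprocess z label γ D \ preprocess z label γ (insert x D)) ∪
      (preprocess z label γ (insert x D) \ preprocess z label γ D)).card
      ≤ 2 + ⌈2 * γ / (1 - γ)⌉₊ := by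
  classical
  set sD := D.filter (fun b => label b = label x) with hsD
  have hxD : x ∉ sD := fun h => hx (Finset.mem_filter.1 h).1
  set P := preprocessLabel z γ sD with hP
  set P' := preprocessLabel z γ (insert x sD) with hP'
  have key : (preprocess z label γ D \ preprocess z label γ (insert x D)) ∪
      (preprocess z label γ (insert x D) \ preprocess z label γ D) ⊆ (P \ P') ∪ (P' \ P) := by
    intro a ha
    by_cases hla : label a = label x
    · have hfD : D.filter (fun b => label b = label a) = sD := by
        rw [hsD]
        apply Finset.filter_congr
        intro b _
        simp [hla]
      have hfD' : (insert x D).filter (fun b => label b = label a) = insert x sD := by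
        rw [Finset.filter_insert, if_pos (by simp [hla]), hfD]
      have h1 : a ∈ preprocess z label γ D ↔ a ∈ P := by
        rw [preprocess, Finset.mem_filter, hfD, ← hP]
        constructor
        · exact fun h => h.2
        · intro h
          exact ⟨(Finset.filter_subset _ _) (PreSens.preprocessLabel_subset z γ sD h), h⟩
      have h2 : a ∈ preprocess z label γ (insert x D) ↔ a ∈ P' := by
        rw [preprocess, Finset.mem_filter, hfD', ← hP']
        constructor
        · exact fun h => h.2
        · intro h
          refine ⟨?_, h⟩
          rcases Finset.mem_insert.1 (PreSens.preprocessLabel_subset z γ _ h) with h' | h'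
          · exact h' ▸ Finset.mem_insert_self x D
          · exact Finset.mem_insert_of_mem ((Finset.filter_subset _ _) h')
      rw [Finset.mem_union, Finset.mem_sdiff, Finset.mem_sdiff] at ha ⊢
      rcases ha with ⟨h, h'⟩ | ⟨h, h'⟩
      · exact Or.inl ⟨h1.1 h, fun hc => h' (h2.2 hc)⟩
      · exact Or.inr ⟨h2.1 h, fun hc => h' (h1.2 hc)⟩
    · exfalso
      have hax : a ≠ x := fun h => hla (h ▸ rfl)
      have hfeq : (insert x D).filter (fun b => label b = label a) =
          D.filter (fun b => label b = label a) := by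
        rw [Finset.filter_insert, if_neg (fun h => hla (by rw [h]))]
      have hmem : a ∈ preprocess z label γ D ↔ a ∈ preprocess z label γ (insert x D) := by
        rw [preprocess, preprocess, Finset.mem_filter, Finset.mem_filter, hfeq,
          Finset.mem_insert]
        constructor
        · exact fun h => ⟨Or.inr h.1, h.2⟩
        · rintro ⟨h | h, h2⟩
          · exact absurd h hax
          · exact ⟨h, h2⟩
      rw [Finset.mem_union, Finset.mem_sdiff, Finset.mem_sdiff] at ha
      rcases ha with ⟨h, h'⟩ | ⟨h, h'⟩
      · exact h' (hmem.1 h)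
      · exact h' (hmem.2 h)
  exact le_trans (Finset.card_le_card key)
    (PreSens.preprocessLabel_insert z hγ0 hγ1 sD x hxD)
end
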